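/- arXiv:1701.01007 — 3 statements merged into one kernel-verified Lean document; each statement's English description precedes it below -/
import Mathlib

section
/- Let α, β ∈ (0,1), α + β ≠ 1, μ = (H(β)-H(α))/(1-α-β), and λ = 1/(1+2^μ). Then the quantity G₀ = α·log₂((1-λ)/λ) + log₂(1/(1-λ)) - H(α) equals G₁ = (1-β)·log₂((1-λ)/λ) + log₂(1/(1-λ)) - H(β). That is, with output distribution λ, the two conditional divergence expressions corresponding to the two channel inputs of the BSSC are equal. -/
/-- Binary entropy function (base 2), extended by `H 0 = H 1 = 0`. -/
noncomputable def binH (p : ℝ) : ℝ := -p * Real.logb 2 p - (1 - p) * Real.logb 2 (1 - p)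

/-- With the optimal output distribution `λ = 1/(1+2^μ)` of the BSSC, the two conditional
divergence expressions corresponding to the two channel inputs are equal:
`α·log₂((1-λ)/λ) + log₂(1/(1-λ)) - H(α) = (1-β)·log₂((1-λ)/λ) + log₂(1/(1-λ)) - H(β)`. -/
theorem bssc_divergence_balance (α β : ℝ) (hα : α ∈ Set.Ioo (0 : ℝ) 1)
    (hβ : β ∈ Set.Ioo (0 : ℝ) 1) (hab : α + β ≠ 1)
    (μ lam : ℝ) (hμ : μ = (binH β - binH α) / (1 - α - β))
    (hlam : lam = 1 / (1 + (2 : ℝ) ^ μ)) :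
    α * Real.logb 2 ((1 - lam) / lam) + Real.logb 2 (1 / (1 - lam)) - binH α =
      (1 - β) * Real.logb 2 ((1 - lam) / lam) + Real.logb 2 (1 / (1 - lam)) - binH β := by
  have hpow : (0 : ℝ) < (2 : ℝ) ^ μ := Real.rpow_pos_of_pos two_pos μ
  have hden : (0 : ℝ) < 1 + (2 : ℝ) ^ μ := by linarith
  have hratio : (1 - lam) / lam = (2 : ℝ) ^ μ := by
    rw [hlam]
    field_simp
    ring
  have hlog : Real.logb 2 ((1 - lam) / lam) = μ := by
    rw [hratio, Real.logb_rpow (by norm_num) (by norm_num)]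
  have hne : (1 : ℝ) - α - β ≠ 0 := by
    intro h; apply hab; linarith
  have hμ' : μ * (1 - α - β) = binH β - binH α := by
    rw [hμ, div_mul_cancel₀ _ hne]
  rw [hlog]
  nlinarith [hμ']
end

section
/- Let α, β, κ ∈ (0,1) and define λ̄ = ακ + (1-κ)(1-β). If the channel input distribution of the BSSC is π(a = b₋₁ | b₋₁) = κ for both values of b₋₁, then the induced channel output transition distribution satisfies P^π(b = b₋₁ | b₋₁) = λ̄ for both values of b₋₁, and the conditional mutual information I(A;B | B₋₁ = b₋₁) equals H(λ̄) - κ·H(α) - (1-κ)·H(β), independently of b₋₁. -/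
lemma bssc_key (α β κ : ℝ)
    (hα : α ∈ Set.Ioo (0 : ℝ) 1) (hβ : β ∈ Set.Ioo (0 : ℝ) 1) (hκ : κ ∈ Set.Ioo (0 : ℝ) 1) :
    κ * α * Real.logb 2 (α / (κ * α + (1 - κ) * (1 - β)))
    + κ * (1 - α) * Real.logb 2 ((1 - α) / (κ * (1 - α) + (1 - κ) * β))
    + (1 - κ) * (1 - β) * Real.logb 2 ((1 - β) / (κ * α + (1 - κ) * (1 - β)))
    + (1 - κ) * β * Real.logb 2 (β / (κ * (1 - α) + (1 - κ) * β))
    = (-(α * κ + (1 - κ) * (1 - β)) * Real.logb 2 (α * κ + (1 - κ) * (1 - β))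
       - (1 - (α * κ + (1 - κ) * (1 - β))) * Real.logb 2 (1 - (α * κ + (1 - κ) * (1 - β))))
      - κ * (-α * Real.logb 2 α - (1 - α) * Real.logb 2 (1 - α))
      - (1 - κ) * (-β * Real.logb 2 β - (1 - β) * Real.logb 2 (1 - β)) := by
  obtain ⟨ha0, ha1⟩ := hα
  obtain ⟨hb0, hb1⟩ := hβ
  obtain ⟨hk0, hk1⟩ := hκ
  have hlam : (0:ℝ) < κ * α + (1 - κ) * (1 - β) := by nlinarith
  have hmu : (0:ℝ) < κ * (1 - α) + (1 - κ) * β := by nlinarith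
  have e1 : α * κ + (1 - κ) * (1 - β) = κ * α + (1 - κ) * (1 - β) := by ring
  rw [e1]
  have e2 : 1 - (κ * α + (1 - κ) * (1 - β)) = κ * (1 - α) + (1 - κ) * β := by ring
  rw [e2]
  rw [Real.logb_div (ne_of_gt ha0) (ne_of_gt hlam),
      Real.logb_div (by linarith : (1:ℝ) - α ≠ 0) (ne_of_gt hmu),
      Real.logb_div (by linarith : (1:ℝ) - β ≠ 0) (ne_of_gt hlam),
      Real.logb_div (ne_of_gt hb0) (ne_of_gt hmu)]
  ring

/-- For the BSSC with input distribution `π(a = b₋₁|b₋₁) = κ`, the induced output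
transition probability is `λ̄ = ακ + (1-κ)(1-β)` for both values of `b₋₁`, and the
conditional mutual information equals `H(λ̄) - κH(α) - (1-κ)H(β)`, independently of `b₋₁`. -/
theorem bssc_constrained_output_and_MI (α β κ : ℝ)
    (hα : α ∈ Set.Ioo (0 : ℝ) 1) (hβ : β ∈ Set.Ioo (0 : ℝ) 1) (hκ : κ ∈ Set.Ioo (0 : ℝ) 1)
    (chan : Fin 2 → Fin 2 → Fin 2 → ℝ)
    (hchan : ∀ b a bm, chan b a bm =
      if a = bm then (if b = bm then α else 1 - α) else (if b = bm then 1 - β else β))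
    (π : Fin 2 → Fin 2 → ℝ)
    (hπ : ∀ a bm, π a bm = if a = bm then κ else 1 - κ) :
    (∀ bm : Fin 2, (∑ a : Fin 2, chan bm a bm * π a bm) = α * κ + (1 - κ) * (1 - β)) ∧
    (∀ bm : Fin 2,
      (∑ a : Fin 2, ∑ b : Fin 2, π a bm * chan b a bm *
          Real.logb 2 (chan b a bm / (∑ a' : Fin 2, π a' bm * chan b a' bm)))
        = binH (α * κ + (1 - κ) * (1 - β)) - κ * binH α - (1 - κ) * binH β) := by
  have key := bssc_key α β κ hα hβ hκ
  constructor
  · intro bm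
    fin_cases bm <;> simp [Fin.sum_univ_two, hchan, hπ] <;> ring
  · intro bm
    simp only [binH]
    fin_cases bm <;>
      · simp only [Fin.sum_univ_two, hchan, hπ]
        norm_num
        ring_nf at key ⊢
        linarith [key]
end

section
/- For the BSSC with parameters α, β ∈ (0,1), α+β ≠ 1, the function f(κ) = H(ακ + (1-κ)(1-β)) - κH(α) - (1-κ)H(β) on (0,1) is concave, and its unique maximizer is κ* = ν = (1-(1-β)(1+2^μ))/((α+β-1)(1+2^μ)) with μ = (H(β)-H(α))/(1-α-β), at which f(ν) = H(λ) - νH(α) - (1-ν)H(β) with λ = 1/(1+2^μ). -/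
open Real Set

lemma binH_symm (p : ℝ) : binH (1 - p) = binH p := by
  unfold binH; simp [sub_sub_cancel]; ring

lemma binH_eq (p : ℝ) : binH p = (Real.negMulLog p + Real.negMulLog (1 - p)) / Real.log 2 := by
  unfold binH Real.negMulLog Real.logb; ring

lemma hasDerivAt_binH {p : ℝ} (hp : p ∈ Ioo (0:ℝ) 1) :
    HasDerivAt binH ((Real.log (1 - p) - Real.log p) / Real.log 2) p := by
  have h1 : HasDerivAt (fun x : ℝ => 1 - x) (-1) p := by
    exact (hasDerivAt_id' p).const_sub 1
  have h2 : HasDerivAt (fun x : ℝ => Real.negMulLog (1 - x)) ((-Real.log (1-p) - 1) * (-1)) p :=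
    (Real.hasDerivAt_negMulLog (by linarith [hp.2] : (1:ℝ) - p ≠ 0)).comp p h1
  have h3 : HasDerivAt (fun x : ℝ => Real.negMulLog x + Real.negMulLog (1 - x))
      ((-Real.log p - 1) + (-Real.log (1-p) - 1) * (-1)) p :=
    (Real.hasDerivAt_negMulLog hp.1.ne').add h2
  have h4 := h3.div_const (Real.log 2)
  have : binH = fun x : ℝ => (Real.negMulLog x + Real.negMulLog (1 - x)) / Real.log 2 :=
    funext binH_eq
  rw [this]
  exact h4.congr_deriv (by ring)

/-- strict antitonicity of the binary-entropy derivative -/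
lemma binHderiv_strictAnti : StrictAntiOn (fun p : ℝ => (Real.log (1 - p) - Real.log p) / Real.log 2)
    (Ioo (0:ℝ) 1) := by
  intro x hx y hy hxy
  have h1 : Real.log (1 - y) < Real.log (1 - x) := Real.log_lt_log (by linarith [hy.2]) (by linarith)
  have h2 : Real.log x < Real.log y := Real.log_lt_log hx.1 hxy
  have hlog2 : (0:ℝ) < Real.log 2 := Real.log_pos (by norm_num)
  exact div_lt_div_of_pos_right (by linarith) hlog2

/-- The single-letter mutual information `f(κ) = H(ακ+(1-κ)(1-β)) - κH(α) - (1-κ)H(β)` of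
the BSSC is concave on `(0,1)`, its unique maximizer on `(0,1)` is `ν`, and
`f(ν) = H(λ) - νH(α) - (1-ν)H(β)`. -/
theorem bssc_single_letter_concave_maximizer (α β : ℝ)
    (hα : α ∈ Set.Ioo (0 : ℝ) 1) (hβ : β ∈ Set.Ioo (0 : ℝ) 1) (hab : α + β ≠ 1)
    (μ lam ν : ℝ) (hμ : μ = (binH β - binH α) / (1 - α - β))
    (hlam : lam = 1 / (1 + (2 : ℝ) ^ μ))
    (hν : ν = (1 - (1 - β) * (1 + (2 : ℝ) ^ μ)) / ((α + β - 1) * (1 + (2 : ℝ) ^ μ))) :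
    ConcaveOn ℝ (Set.Ioo (0 : ℝ) 1)
        (fun κ => binH (α * κ + (1 - κ) * (1 - β)) - κ * binH α - (1 - κ) * binH β) ∧
    ν ∈ Set.Ioo (0 : ℝ) 1 ∧
    (∀ κ ∈ Set.Ioo (0 : ℝ) 1,
      binH (α * κ + (1 - κ) * (1 - β)) - κ * binH α - (1 - κ) * binH β ≤
        binH (α * ν + (1 - ν) * (1 - β)) - ν * binH α - (1 - ν) * binH β) ∧
    (∀ κ ∈ Set.Ioo (0 : ℝ) 1,
      binH (α * κ + (1 - κ) * (1 - β)) - κ * binH α - (1 - κ) * binH β =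
        binH (α * ν + (1 - ν) * (1 - β)) - ν * binH α - (1 - ν) * binH β → κ = ν) ∧
    binH (α * ν + (1 - ν) * (1 - β)) - ν * binH α - (1 - ν) * binH β =
      binH lam - ν * binH α - (1 - ν) * binH β := by
  obtain ⟨hα0, hα1⟩ := hα
  obtain ⟨hβ0, hβ1⟩ := hβ
  have hlog2 : (0:ℝ) < Real.log 2 := Real.log_pos (by norm_num)
  set s : ℝ := α + β - 1 with hs_def
  have hs : s ≠ 0 := sub_ne_zero.mpr hab
  have h1αβ : 1 - α - β ≠ 0 := by intro h; apply hs; rw [hs_def]; linarith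
  set F : ℝ → ℝ := fun κ => binH (α * κ + (1 - κ) * (1 - β)) - κ * binH α - (1 - κ) * binH β
    with hF
  set G : ℝ → ℝ := fun κ => α * κ + (1 - κ) * (1 - β) with hGdef
  have hG_mem : ∀ κ ∈ Icc (0:ℝ) 1, G κ ∈ Ioo (0:ℝ) 1 := by
    intro κ hκ
    have hmem := (convex_Ioo (0:ℝ) 1) (⟨hα0, hα1⟩ : α ∈ Ioo (0:ℝ) 1)
      (⟨by linarith, by linarith⟩ : (1 - β) ∈ Ioo (0:ℝ) 1) hκ.1
      (show (0:ℝ) ≤ 1 - κ by linarith [hκ.2]) (show κ + (1 - κ) = 1 by ring)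
    have heq : G κ = κ • α + (1 - κ) • (1 - β) := by
      show α * κ + (1 - κ) * (1 - β) = _
      simp [smul_eq_mul]; ring
    rw [heq]; exact hmem
  set D : ℝ → ℝ := fun κ =>
      s * ((Real.log (1 - G κ) - Real.log (G κ)) / Real.log 2) + (binH β - binH α) with hDdef
  have hGd : ∀ κ : ℝ, HasDerivAt G s κ := by
    intro κ
    have h : HasDerivAt (fun κ : ℝ => α * κ + (1 - κ) * (1 - β))
        (α * 1 + (0 - 1) * (1 - β)) κ :=
      ((hasDerivAt_id κ).const_mul α).add
        (((hasDerivAt_const κ (1:ℝ)).sub (hasDerivAt_id κ)).mul_const (1 - β))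
    convert h using 1; rw [hs_def]; ring
  have hFd : ∀ κ ∈ Ioo (0:ℝ) 1, HasDerivAt F (D κ) κ := by
    intro κ hκ
    have hGκ := hG_mem κ (Ioo_subset_Icc_self hκ)
    have h1 : HasDerivAt (fun x => binH (G x))
        (((Real.log (1 - G κ) - Real.log (G κ)) / Real.log 2) * s) κ :=
      (hasDerivAt_binH hGκ).comp κ (hGd κ)
    have h2 : HasDerivAt (fun x : ℝ => x * binH α) (1 * binH α) κ :=
      (hasDerivAt_id κ).mul_const _
    have h3 : HasDerivAt (fun x : ℝ => (1 - x) * binH β) ((0 - 1) * binH β) κ :=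
      ((hasDerivAt_const κ (1:ℝ)).sub (hasDerivAt_id κ)).mul_const _
    have h4 := (h1.sub h2).sub h3
    exact h4.congr_deriv (by rw [hDdef]; ring)
  have hDd : ∀ κ ∈ Ioo (0:ℝ) 1,
      HasDerivAt D (-(s^2) * (1/(1 - G κ) + 1/(G κ)) / Real.log 2) κ := by
    intro κ hκ
    have hGκ := hG_mem κ (Ioo_subset_Icc_self hκ)
    have h1G : HasDerivAt (fun x => 1 - G x) (0 - s) κ :=
      (hasDerivAt_const κ (1:ℝ)).sub (hGd κ)
    have hlog1 : HasDerivAt (fun x => Real.log (1 - G x)) ((1 - G κ)⁻¹ * (0 - s)) κ :=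
      (Real.hasDerivAt_log (by linarith [hGκ.2])).comp κ h1G
    have hlog2' : HasDerivAt (fun x => Real.log (G x)) ((G κ)⁻¹ * s) κ :=
      (Real.hasDerivAt_log hGκ.1.ne').comp κ (hGd κ)
    have h := (((hlog1.sub hlog2').div_const (Real.log 2)).const_mul s).add_const (binH β - binH α)
    refine h.congr_deriv ?_
    ring
  have hDneg : ∀ κ ∈ Ioo (0:ℝ) 1, -(s^2) * (1/(1 - G κ) + 1/(G κ)) / Real.log 2 < 0 := by
    intro κ hκ
    have hGκ := hG_mem κ (Ioo_subset_Icc_self hκ)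
    have ha : (0:ℝ) < 1/(1 - G κ) := one_div_pos.mpr (by linarith [hGκ.2])
    have hb : (0:ℝ) < 1/(G κ) := one_div_pos.mpr hGκ.1
    have hs2 : -(s^2) < 0 := by
      have : (0:ℝ) < s^2 := by positivity
      linarith
    apply div_neg_of_neg_of_pos _ hlog2
    exact mul_neg_of_neg_of_pos hs2 (by linarith)
  have hFcont : ContinuousOn F (Ioo (0:ℝ) 1) := fun x hx =>
    (hFd x hx).differentiableAt.continuousAt.continuousWithinAt
  have hDcont : ContinuousOn D (Ioo (0:ℝ) 1) := fun x hx =>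
    (hDd x hx).differentiableAt.continuousAt.continuousWithinAt
  -- strict concavity
  have hconc : StrictConcaveOn ℝ (Ioo (0:ℝ) 1) F := by
    apply strictConcaveOn_of_deriv2_neg (convex_Ioo 0 1) hFcont
    intro x hx
    rw [interior_Ioo] at hx
    have hev : deriv F =ᶠ[nhds x] D := by
      filter_upwards [Ioo_mem_nhds hx.1 hx.2] with y hy
      exact (hFd y hy).deriv
    have : deriv^[2] F x = deriv D x := by
      simp only [Function.iterate_succ, Function.iterate_zero, Function.comp_apply, id]
      exact Filter.EventuallyEq.deriv_eq hev
    rw [this, (hDd x hx).deriv]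
    exact hDneg x hx
  -- basic facts on lam
  have h2μ : (0:ℝ) < (2:ℝ) ^ μ := Real.rpow_pos_of_pos two_pos μ
  have h2μ1 : (0:ℝ) < 1 + (2:ℝ) ^ μ := by linarith
  have hlam0 : 0 < lam := by rw [hlam]; positivity
  have hlam1 : lam < 1 := by
    rw [hlam, div_lt_one h2μ1]; linarith
  have hνlam : ν = (lam - (1 - β)) / s := by
    rw [hν, hlam, hs_def]
    field_simp
  have hGν : G ν = lam := by
    rw [hGdef]
    simp only
    have : α * ν + (1 - ν) * (1 - β) = (1 - β) + s * ν := by rw [hs_def]; ring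
    rw [this, hνlam, mul_div_cancel₀ _ hs]
    ring
  -- derivative of binH at lam equals μ
  have hH'lam : (Real.log (1 - lam) - Real.log lam) / Real.log 2 = μ := by
    have hratio : (1 - lam) / lam = (2:ℝ) ^ μ := by
      rw [hlam]; field_simp; ring
    have : Real.log (1 - lam) - Real.log lam = Real.log ((1 - lam)/lam) :=
      (Real.log_div (by linarith) hlam0.ne').symm
    rw [this, hratio, Real.log_rpow two_pos, mul_div_assoc, div_self hlog2.ne', mul_one]
  -- μ is the slope of binH between 1-β and α; MVT gives lam strictly between
  have hbinHcont : ContinuousOn binH (Ioo (0:ℝ) 1) := fun x hx =>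
    (hasDerivAt_binH hx).differentiableAt.continuousAt.continuousWithinAt
  have hlam_mem : lam ∈ Ioo (0:ℝ) 1 := ⟨hlam0, hlam1⟩
  have hlam_btw : (s > 0 → lam ∈ Ioo (1 - β) α) ∧ (s < 0 → lam ∈ Ioo α (1 - β)) := by
    constructor
    · intro hspos
      have hab' : 1 - β < α := by rw [hs_def] at hspos; linarith
      have hsub : Icc (1-β) α ⊆ Ioo (0:ℝ) 1 := fun x hx =>
        ⟨by linarith [hx.1], by linarith [hx.2]⟩
      obtain ⟨c, hc, hcd⟩ := exists_hasDerivAt_eq_slope binH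
        (fun p => (Real.log (1 - p) - Real.log p) / Real.log 2) hab'
        (hbinHcont.mono hsub)
        (fun x hx => hasDerivAt_binH (hsub (Ioo_subset_Icc_self hx)))
      have hslope : (binH α - binH (1 - β)) / (α - (1 - β)) = μ := by
        rw [binH_symm, hμ, div_eq_div_iff (by intro h; apply hs; rw [hs_def]; linarith) h1αβ]
        ring
      have hc01 : c ∈ Ioo (0:ℝ) 1 := hsub (Ioo_subset_Icc_self hc)
      have hceq : (Real.log (1 - c) - Real.log c) / Real.log 2 = μ := by
        rw [hslope] at hcd; exact hcd
      have : c = lam := binHderiv_strictAnti.injOn hc01 hlam_mem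
        (by exact hceq.trans hH'lam.symm)
      rwa [← this]
    · intro hsneg
      have hab' : α < 1 - β := by rw [hs_def] at hsneg; linarith
      have hsub : Icc α (1-β) ⊆ Ioo (0:ℝ) 1 := fun x hx =>
        ⟨by linarith [hx.1], by linarith [hx.2]⟩
      obtain ⟨c, hc, hcd⟩ := exists_hasDerivAt_eq_slope binH
        (fun p => (Real.log (1 - p) - Real.log p) / Real.log 2) hab'
        (hbinHcont.mono hsub)
        (fun x hx => hasDerivAt_binH (hsub (Ioo_subset_Icc_self hx)))
      have hslope : (binH (1 - β) - binH α) / ((1 - β) - α) = μ := by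
        rw [binH_symm, hμ, div_eq_div_iff (by intro h; apply hs; rw [hs_def]; linarith) h1αβ]
        ring
      have hc01 : c ∈ Ioo (0:ℝ) 1 := hsub (Ioo_subset_Icc_self hc)
      have hceq : (Real.log (1 - c) - Real.log c) / Real.log 2 = μ := by
        rw [hslope] at hcd; exact hcd
      have : c = lam := binHderiv_strictAnti.injOn hc01 hlam_mem
        (by exact hceq.trans hH'lam.symm)
      rwa [← this]
  have hν_mem : ν ∈ Ioo (0:ℝ) 1 := by
    rcases hs.lt_or_gt with hsneg | hspos
    · have hl := hlam_btw.2 hsneg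
      constructor
      · rw [hνlam]
        exact div_pos_of_neg_of_neg (by linarith [hl.2]) hsneg
      · have h1ν : 0 < 1 - ν := by
          have : 1 - ν = (α - lam) / s := by
            rw [hνlam]; field_simp; rw [hs_def]; ring
          rw [this]
          exact div_pos_of_neg_of_neg (by linarith [hl.1]) hsneg
        linarith
    · have hl := hlam_btw.1 hspos
      constructor
      · rw [hνlam]
        exact div_pos (by linarith [hl.1]) hspos
      · have h1ν : 0 < 1 - ν := by
          have : 1 - ν = (α - lam) / s := by
            rw [hνlam]; field_simp; rw [hs_def]; ring
          rw [this]
          exact div_pos (by linarith [hl.2]) hspos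
        linarith
  -- D ν = 0
  have hDν : D ν = 0 := by
    rw [hDdef]
    simp only
    rw [hGν, hH'lam, hμ]
    field_simp
    rw [hs_def]
    ring
  -- D strictly antitone
  have hDanti : StrictAntiOn D (Ioo (0:ℝ) 1) := by
    apply strictAntiOn_of_deriv_neg (convex_Ioo 0 1) hDcont
    intro x hx
    rw [interior_Ioo] at hx
    rw [(hDd x hx).deriv]
    exact hDneg x hx
  -- strict maximality
  have hlt : ∀ κ ∈ Ioo (0:ℝ) 1, κ ≠ ν → F κ < F ν := by
    intro κ hκ hne
    rcases hne.lt_or_gt with h | h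
    · have hIcc : Icc κ ν ⊆ Ioo (0:ℝ) 1 := fun x hx =>
        ⟨lt_of_lt_of_le hκ.1 hx.1, lt_of_le_of_lt hx.2 hν_mem.2⟩
      have hmono : StrictMonoOn F (Icc κ ν) := by
        apply strictMonoOn_of_deriv_pos (convex_Icc _ _) (hFcont.mono hIcc)
        intro x hx
        rw [interior_Icc] at hx
        have hx01 : x ∈ Ioo (0:ℝ) 1 := hIcc ⟨hx.1.le, hx.2.le⟩
        rw [(hFd x hx01).deriv]
        have := hDanti hx01 hν_mem hx.2
        linarith [hDν ▸ this]
      exact hmono (left_mem_Icc.mpr h.le) (right_mem_Icc.mpr h.le) h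
    · have hIcc : Icc ν κ ⊆ Ioo (0:ℝ) 1 := fun x hx =>
        ⟨lt_of_lt_of_le hν_mem.1 hx.1, lt_of_le_of_lt hx.2 hκ.2⟩
      have hanti : StrictAntiOn F (Icc ν κ) := by
        apply strictAntiOn_of_deriv_neg (convex_Icc _ _) (hFcont.mono hIcc)
        intro x hx
        rw [interior_Icc] at hx
        have hx01 : x ∈ Ioo (0:ℝ) 1 := hIcc ⟨hx.1.le, hx.2.le⟩
        rw [(hFd x hx01).deriv]
        have := hDanti hν_mem hx01 hx.1
        linarith [hDν ▸ this]
      exact hanti (left_mem_Icc.mpr h.le) (right_mem_Icc.mpr h.le) h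
  refine ⟨hconc.concaveOn, hν_mem, ?_, ?_, ?_⟩
  · intro κ hκ
    by_cases hκν : κ = ν
    · subst hκν; exact le_refl _
    · exact (hlt κ hκ hκν).le
  · intro κ hκ heq
    by_contra hne
    exact (hlt κ hκ hne).ne heq
  · show binH (G ν) - ν * binH α - (1 - ν) * binH β = _
    rw [hGν]
end
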